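/- Azuma-type bound for bounded supermartingales: suppose 0 < η ≤ N/10, m ≥ 1 is an integer, 0 < a ≤ ηm/10, and A_0, A_1, …, A_m is an (η,N)-bounded supermartingale, meaning E(A_{i+1} | F_i) ≤ A_i and A_i − η ≤ A_{i+1} ≤ A_i + N almost surely for all i. Then P(A_m ≥ A_0 + a) ≤ exp(−a²/(3ηmN)). -/

import Mathlib

open MeasureTheory

lemma exp_le_quad_stmt16 {x : ℝ} (hx : |x| ≤ 1) : Real.exp x ≤ 1 + x + 3/4 * x^2 := by
  have h := Real.exp_bound hx (n := 2) (by norm_num)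
  rw [Finset.sum_range_succ, Finset.sum_range_one] at h
  norm_num [Nat.factorial] at h
  rw [abs_le] at h
  nlinarith [sq_abs x]

set_option maxHeartbeats 2000000 in
/-- Azuma-type bound for `(η,N)`-bounded supermartingales. -/
theorem stmt_16 {Ω : Type*} {m0 : MeasurableSpace Ω} (μ : Measure Ω)
    [IsProbabilityMeasure μ] (ℱ : Filtration ℕ m0)
    (A : ℕ → Ω → ℝ) (m : ℕ) (hm : 1 ≤ m) (η N a : ℝ)
    (hη : 0 < η) (hηN : η ≤ N / 10) (ha0 : 0 < a) (ha : a ≤ η * m / 10)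
    (hadapted : Adapted ℱ A)
    (hint : ∀ i, Integrable (A i) μ)
    (hbdd : ∀ i < m, ∀ᵐ ω ∂μ, A i ω - η ≤ A (i + 1) ω ∧ A (i + 1) ω ≤ A i ω + N)
    (hsup : ∀ i < m, μ[A (i + 1) | ℱ i] ≤ᵐ[μ] A i) :
    (μ {ω | A 0 ω + a ≤ A m ω}).toReal ≤ Real.exp (-a ^ 2 / (3 * η * m * N)) := by
  have hN : 0 < N := by linarith
  have hηN' : η ≤ N := by linarith
  have hmR : (1 : ℝ) ≤ (m : ℝ) := by exact_mod_cast hm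
  have hm0 : (0 : ℝ) < (m : ℝ) := by linarith
  obtain ⟨t, ht_def⟩ : ∃ t : ℝ, t = 2 * a / (3 * m * η * N) := ⟨_, rfl⟩
  have ht0 : 0 < t := by rw [ht_def]; positivity
  have htN : t * N ≤ 1 := by
    rw [ht_def, div_mul_eq_mul_div, div_le_one (by positivity)]
    nlinarith
  obtain ⟨B, hB_def⟩ : ∃ B : ℝ, B = 1 + 3/4 * η * N * t^2 := ⟨_, rfl⟩
  obtain ⟨c, hc_def⟩ : ∃ c : ℝ, c = t + 3/4 * t^2 * (N - η) := ⟨_, rfl⟩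
  have hc : 0 ≤ c := by
    rw [hc_def]
    nlinarith [mul_nonneg (sq_nonneg t) (by linarith : (0:ℝ) ≤ N - η), ht0.le]
  have hB0 : (0:ℝ) ≤ B := by
    rw [hB_def]
    nlinarith [mul_nonneg (mul_nonneg hη.le hN.le) (sq_nonneg t)]
  -- strong measurability of A k w.r.t. m0
  have hAm : ∀ k, StronglyMeasurable[m0] (A k) := fun k => (hadapted k).stronglyMeasurable.mono (ℱ.le k)
  -- a.e. bound |A k - A 0| ≤ k * N
  have habs : ∀ k, k ≤ m → ∀ᵐ ω ∂μ, |A k ω - A 0 ω| ≤ k * N := by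
    intro k
    induction k with
    | zero => intro _; filter_upwards with ω; simp
    | succ k ih =>
      intro hk1
      have hk : k < m := hk1
      filter_upwards [ih hk.le, hbdd k hk] with ω h1 h2
      have h3 : |A (k+1) ω - A k ω| ≤ N := by
        rw [abs_le]; constructor <;> [linarith [h2.1]; linarith [h2.2]]
      have : |A (k+1) ω - A 0 ω| ≤ |A (k+1) ω - A k ω| + |A k ω - A 0 ω| := by
        have := abs_add_le (A (k+1) ω - A k ω) (A k ω - A 0 ω)
        simpa using this
      push_cast
      nlinarith
  -- integrability of exponentials
  have hXsm : ∀ k, StronglyMeasurable[ℱ k] (fun ω => Real.exp (t * (A k ω - A 0 ω))) := by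
    intro k
    exact Real.continuous_exp.comp_stronglyMeasurable
      (((hadapted k).stronglyMeasurable.sub ((hadapted 0).stronglyMeasurable.mono (ℱ.mono (Nat.zero_le k)))).const_mul t)
  have hXint : ∀ k, k ≤ m → Integrable (fun ω => Real.exp (t * (A k ω - A 0 ω))) μ := by
    intro k hk
    refine Integrable.mono' (integrable_const (Real.exp (t * (k * N))))
      ((hXsm k).mono (ℱ.le k)).aestronglyMeasurable ?_
    filter_upwards [habs k hk] with ω hω
    rw [Real.norm_eq_abs, abs_of_nonneg (Real.exp_nonneg _), Real.exp_le_exp]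
    have : A k ω - A 0 ω ≤ k * N := le_trans (le_abs_self _) hω
    nlinarith
  -- key one-step bound
  have hstep : ∀ k, k < m →
      (∫ ω, Real.exp (t * (A (k+1) ω - A 0 ω)) ∂μ) ≤
        B * ∫ ω, Real.exp (t * (A k ω - A 0 ω)) ∂μ := by
    intro k hk
    obtain ⟨X, hX_def⟩ : ∃ X : Ω → ℝ, X = fun ω => Real.exp (t * (A k ω - A 0 ω)) := ⟨_, rfl⟩
    obtain ⟨D, hD_def⟩ : ∃ D : Ω → ℝ, D = A (k+1) - A k := ⟨_, rfl⟩
    have hXsmk : StronglyMeasurable[ℱ k] X := by rw [hX_def]; exact hXsm k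
    have hXintk : Integrable X μ := by rw [hX_def]; exact hXint k hk.le
    have hDint : Integrable D μ := by rw [hD_def]; exact (hint (k+1)).sub (hint k)
    have hXDint : Integrable (X * D) μ := by
      refine Integrable.bdd_mul (c := Real.exp (t * (k * N))) hDint
        (hXsmk.mono (ℱ.le k)).aestronglyMeasurable ?_
      filter_upwards [habs k hk.le] with ω hω
      rw [hX_def]
      simp only [Real.norm_eq_abs, abs_of_nonneg (Real.exp_nonneg _), Real.exp_le_exp]
      have : A k ω - A 0 ω ≤ k * N := le_trans (le_abs_self _) hω
      nlinarith
    -- cross term is nonpositive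
    have hcross : (∫ ω, (X * D) ω ∂μ) ≤ 0 := by
      rw [← integral_condExp (ℱ.le k) (f := X * D)]
      have hpull : μ[X * D|ℱ k] =ᵐ[μ] X * μ[D|ℱ k] :=
        condExp_mul_of_stronglyMeasurable_left hXsmk hXDint hDint
      have hD0 : μ[D|ℱ k] ≤ᵐ[μ] 0 := by
        have h1 : μ[D|ℱ k] =ᵐ[μ] μ[A (k+1)|ℱ k] - μ[A k|ℱ k] := by
          rw [hD_def]; exact condExp_sub (hint (k+1)) (hint k) _
        have h2 : μ[A k|ℱ k] = A k :=
          condExp_of_stronglyMeasurable (ℱ.le k) (hadapted k).stronglyMeasurable (hint k)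
        filter_upwards [h1, hsup k hk] with ω e1 e3
        have e2 := congrFun h2 ω
        simp only [Pi.sub_apply, Pi.zero_apply] at *
        rw [e1, e2]; linarith
      have : μ[X * D|ℱ k] ≤ᵐ[μ] 0 := by
        filter_upwards [hpull, hD0] with ω e1 e2
        rw [e1]
        simp only [Pi.mul_apply, Pi.zero_apply] at *
        have hX0 : 0 ≤ X ω := by rw [hX_def]; exact Real.exp_nonneg _
        exact mul_nonpos_iff.2 (Or.inl ⟨hX0, e2⟩)
      exact integral_nonpos_of_ae this
    -- pointwise a.e. bound
    have hpt : ∀ᵐ ω ∂μ, Real.exp (t * (A (k+1) ω - A 0 ω)) ≤ B * X ω + c * (X * D) ω := by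
      filter_upwards [hbdd k hk] with ω hω
      obtain ⟨h1, h2⟩ := hω
      have hDω : D ω = A (k+1) ω - A k ω := by rw [hD_def]; rfl
      have hDlb : -η ≤ D ω := by rw [hDω]; linarith
      have hDub : D ω ≤ N := by rw [hDω]; linarith
      have habs1 : |t * D ω| ≤ 1 := by
        rw [abs_le]
        constructor
        · nlinarith [mul_nonneg ht0.le (by linarith : (0:ℝ) ≤ D ω + η),
            mul_nonneg ht0.le (by linarith : (0:ℝ) ≤ N - η)]
        · nlinarith [mul_nonneg ht0.le (by linarith : (0:ℝ) ≤ N - D ω)]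
      have hkey : Real.exp (t * D ω) ≤ B + c * D ω := by
        have h3 := exp_le_quad_stmt16 habs1
        have h4 : 0 ≤ (N - D ω) * (D ω + η) := mul_nonneg (by linarith) (by linarith)
        nlinarith [mul_nonneg (sq_nonneg t) h4]
      have hXω : X ω = Real.exp (t * (A k ω - A 0 ω)) := by rw [hX_def]
      have hsplit : Real.exp (t * (A (k+1) ω - A 0 ω)) = X ω * Real.exp (t * D ω) := by
        rw [hXω, hDω, ← Real.exp_add]
        congr 1
        ring
      rw [hsplit]
      have hX0 : 0 ≤ X ω := by rw [hXω]; exact Real.exp_nonneg _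
      calc X ω * Real.exp (t * D ω) ≤ X ω * (B + c * D ω) :=
            mul_le_mul_of_nonneg_left hkey hX0
        _ = B * X ω + c * (X * D) ω := by simp only [Pi.mul_apply]; ring
    have hRint : Integrable (fun ω => B * X ω + c * (X * D) ω) μ :=
      (hXintk.const_mul B).add (hXDint.const_mul c)
    have hXnn : 0 ≤ ∫ ω, X ω ∂μ := by
      refine integral_nonneg ?_
      intro ω
      rw [hX_def]
      exact Real.exp_nonneg _
    calc (∫ ω, Real.exp (t * (A (k+1) ω - A 0 ω)) ∂μ)
        ≤ ∫ ω, (B * X ω + c * (X * D) ω) ∂μ :=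
          integral_mono_ae (hXint (k+1) hk) hRint hpt
      _ = B * (∫ ω, X ω ∂μ) + c * ∫ ω, (X * D) ω ∂μ := by
          rw [integral_add (hXintk.const_mul B) (hXDint.const_mul c),
            integral_const_mul, integral_const_mul]
      _ ≤ B * (∫ ω, X ω ∂μ) + 0 := by
          have := mul_nonpos_iff.2 (Or.inl ⟨hc, hcross⟩)
          linarith
      _ = B * ∫ ω, Real.exp (t * (A k ω - A 0 ω)) ∂μ := by rw [add_zero, hX_def]
  -- induction
  have hind : ∀ k, k ≤ m → (∫ ω, Real.exp (t * (A k ω - A 0 ω)) ∂μ) ≤ B ^ k := by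
    intro k
    induction k with
    | zero =>
      intro _
      simp only [sub_self, mul_zero, Real.exp_zero, pow_zero]
      simp [integral_const]
    | succ k ih =>
      intro hk1
      have hk : k < m := hk1
      calc (∫ ω, Real.exp (t * (A (k+1) ω - A 0 ω)) ∂μ)
          ≤ B * ∫ ω, Real.exp (t * (A k ω - A 0 ω)) ∂μ := hstep k hk
        _ ≤ B * B ^ k := mul_le_mul_of_nonneg_left (ih hk.le) hB0
        _ = B ^ (k+1) := by ring
  -- Chernoff
  have hset : {ω | A 0 ω + a ≤ A m ω} = {ω | a ≤ (fun ω => A m ω - A 0 ω) ω} := by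
    ext ω; simp only [Set.mem_setOf_eq]; constructor <;> intro h <;> linarith
  rw [hset]
  have hmarkov := ProbabilityTheory.measure_ge_le_exp_mul_mgf (X := fun ω => A m ω - A 0 ω)
    (μ := μ) a ht0.le (hXint m le_rfl)
  have hmgf : ProbabilityTheory.mgf (fun ω => A m ω - A 0 ω) μ t
      = ∫ ω, Real.exp (t * (A m ω - A 0 ω)) ∂μ := rfl
  have hBexp : B ^ m ≤ Real.exp (3/4 * η * N * t^2 * m) := by
    have h1 : B ≤ Real.exp (3/4 * η * N * t^2) := by
      have := Real.add_one_le_exp (3/4 * η * N * t^2)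
      rw [hB_def]; linarith
    calc B ^ m ≤ Real.exp (3/4 * η * N * t^2) ^ m := pow_le_pow_left₀ hB0 h1 m
      _ = Real.exp (3/4 * η * N * t^2 * m) := by
          rw [← Real.exp_nat_mul]; ring_nf
  have hfinal : Real.exp (-t * a) * Real.exp (3/4 * η * N * t^2 * m)
      = Real.exp (-a ^ 2 / (3 * η * m * N)) := by
    rw [← Real.exp_add]
    congr 1
    rw [ht_def]
    field_simp
    ring
  calc (μ {ω | a ≤ (fun ω => A m ω - A 0 ω) ω}).toReal
      ≤ Real.exp (-t * a) * ProbabilityTheory.mgf (fun ω => A m ω - A 0 ω) μ t := hmarkov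
    _ ≤ Real.exp (-t * a) * Real.exp (3/4 * η * N * t^2 * m) := by
        rw [hmgf]
        exact mul_le_mul_of_nonneg_left ((hind m le_rfl).trans hBexp) (Real.exp_nonneg _)
    _ = Real.exp (-a ^ 2 / (3 * η * m * N)) := hfinal
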